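/- If Furstenberg's conjecture fails, i.e. there exists a continuous (atomless) Borel probability measure μ on the circle 𝕋 = ℝ/ℤ with μ̂(2n) = μ̂(3n) = μ̂(n) for all n ∈ ℤ and μ ≠ Lebesgue measure, then there exists an irrational x ∈ 𝕋 such that the sequence (s_n x) is not uniformly distributed mod 1, where (s_n) enumerates S = {2^j 3^k}. Equivalently: if the set W(S) of x for which (s_n x) is not uniformly distributed equals ℚ ∩ [0,1), then Furstenberg's conjecture holds. -/

import Mathlib

open MeasureTheory Filter Complex Real

section Aux

local instance : Fact ((0:ℝ) < 1) := ⟨zero_lt_one⟩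

lemma aux_vol_fourier {m : ℤ} (hm : m ≠ 0) :
    ∫ x : AddCircle (1:ℝ), fourier m x ∂volume = 0 := by
  rw [AddCircle.volume_eq_smul_haarAddCircle]
  simp only [ENNReal.ofReal_one, one_smul]
  exact integral_eq_zero_of_add_right_eq_neg
    (fourier_add_half_inv_index hm zero_lt_one)

lemma aux_integrable (ν : Measure (AddCircle (1:ℝ))) [IsFiniteMeasure ν]
    {f : AddCircle (1:ℝ) → ℂ} (hf : Continuous f) : Integrable f ν :=
  hf.integrable_of_hasCompactSupport (isClosed_tsupport f).isCompact

lemma aux_integrable_real (ν : Measure (AddCircle (1:ℝ))) [IsFiniteMeasure ν]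
    {f : AddCircle (1:ℝ) → ℝ} (hf : Continuous f) : Integrable f ν :=
  hf.integrable_of_hasCompactSupport (isClosed_tsupport f).isCompact

lemma aux_cont_integral (ν : Measure (AddCircle (1:ℝ))) [IsProbabilityMeasure ν] :
    Continuous (fun f : C(AddCircle (1:ℝ), ℂ) => ∫ x, f x ∂ν) := by
  have : LipschitzWith 1 (fun f : C(AddCircle (1:ℝ), ℂ) => ∫ x, f x ∂ν) := by
    apply LipschitzWith.of_dist_le_mul
    intro f g
    rw [dist_eq_norm, ← integral_sub (aux_integrable ν f.continuous)
      (aux_integrable ν g.continuous)]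
    have hb : ∀ x, ‖f x - g x‖ ≤ ‖f - g‖ := fun x => by
      simpa using ContinuousMap.norm_coe_le_norm (f - g) x
    calc ‖∫ x, (f x - g x) ∂ν‖ ≤ ‖f - g‖ * (ν Set.univ).toReal :=
          norm_integral_le_of_norm_le_const (Eventually.of_forall hb)
      _ = 1 * dist f g := by
          rw [measure_univ, ENNReal.toReal_one, dist_eq_norm]; ring
  exact this.continuous

/-- If a probability measure has all nonzero Fourier coefficients vanishing, it is
Lebesgue measure. -/
lemma aux_ext (μ : Measure (AddCircle (1:ℝ))) [IsProbabilityMeasure μ]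
    (h0 : ∀ m : ℤ, m ≠ 0 → ∫ x, fourier m x ∂μ = 0) : μ = volume := by
  haveI : IsProbabilityMeasure (volume : Measure (AddCircle (1:ℝ))) :=
    ⟨by rw [AddCircle.measure_univ]; simp⟩
  -- integrals against all continuous functions agree
  have key : ∀ f : C(AddCircle (1:ℝ), ℂ), ∫ x, f x ∂μ = ∫ x, f x ∂volume := by
    let V : Submodule ℂ C(AddCircle (1:ℝ), ℂ) :=
      { carrier := {f | ∫ x, f x ∂μ = ∫ x, f x ∂volume}
        add_mem' := by
          intro f g hf hg
          simp only [Set.mem_setOf_eq, ContinuousMap.add_apply] at *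
          rw [integral_add (aux_integrable μ f.continuous) (aux_integrable μ g.continuous),
            integral_add (aux_integrable volume f.continuous)
              (aux_integrable volume g.continuous), hf, hg]
        zero_mem' := by simp
        smul_mem' := by
          intro c f hf
          simp only [Set.mem_setOf_eq, ContinuousMap.smul_apply, smul_eq_mul] at *
          rw [integral_const_mul, integral_const_mul, hf] }
    have hVc : IsClosed (V : Set C(AddCircle (1:ℝ), ℂ)) :=
      isClosed_eq (aux_cont_integral μ) (aux_cont_integral volume)
    have hspan : Submodule.span ℂ (Set.range (@fourier 1)) ≤ V := by
      rw [Submodule.span_le]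
      rintro _ ⟨m, rfl⟩
      show ∫ x, fourier m x ∂μ = ∫ x, fourier m x ∂volume
      rcases eq_or_ne m 0 with rfl | hm
      · simp [fourier_zero, integral_const, measure_univ]
      · rw [h0 m hm, aux_vol_fourier hm]
    have := Submodule.topologicalClosure_minimal _ hspan hVc
    rw [span_fourier_closure_eq_top] at this
    intro f
    exact this (Submodule.mem_top (x := f))
  -- deduce equality of measures
  apply ext_of_forall_lintegral_eq_of_IsFiniteMeasure
  intro g
  have hgR : Continuous fun x => (g x : ℝ) := NNReal.continuous_coe.comp g.continuous
  have hgC : Continuous fun x : AddCircle (1:ℝ) => ((g x : ℝ) : ℂ) :=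
    Complex.continuous_ofReal.comp hgR
  have hf := key ⟨fun x => ((g x : ℝ) : ℂ), hgC⟩
  simp only [ContinuousMap.coe_mk] at hf
  have hreal : ∫ x, (g x : ℝ) ∂μ = ∫ x, (g x : ℝ) ∂volume := by
    rw [← RCLike.ofReal_inj (K := ℂ), ← integral_ofReal, ← integral_ofReal]
    exact hf
  rw [lintegral_coe_eq_integral _ (aux_integrable_real μ hgR),
    lintegral_coe_eq_integral _ (aux_integrable_real volume hgR), hreal]

lemma aux_infinite : {m : ℕ | ∃ j k : ℕ, m = 2 ^ j * 3 ^ k}.Infinite := by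
  exact Set.infinite_of_injective_forall_mem (f := fun j : ℕ => 2 ^ j)
    (fun a b hab => Nat.pow_right_injective (le_refl 2) hab)
    (fun j => ⟨j, 0, by ring⟩)

end Aux

/-- If Furstenberg's conjecture fails — i.e. there is an atomless Borel probability
measure `μ` on the circle with `μ̂(2n) = μ̂(3n) = μ̂(n)` for all `n` and `μ ≠ Lebesgue` —
then there is an irrational `x` for which the sequence `(s_n x)` (with `(s_n)`
enumerating the Furstenberg set) is not uniformly distributed mod 1 (Weyl criterion). -/
theorem furstenberg_conjecture_failure_gives_nonnormal_irrational
    (μ : Measure (AddCircle (1 : ℝ))) [IsProbabilityMeasure μ] [NullSingletonClass μ]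
    (hinv : ∀ n : ℤ, (∫ x, fourier (-(2 * n)) x ∂μ) = ∫ x, fourier (-n) x ∂μ ∧
                     (∫ x, fourier (-(3 * n)) x ∂μ) = ∫ x, fourier (-n) x ∂μ)
    (hne : μ ≠ volume) :
    ∃ x : ℝ, Irrational x ∧
      ¬ (∀ h : ℤ, h ≠ 0 →
        Tendsto (fun N : ℕ =>
            (∑ n ∈ Finset.range N,
              Complex.exp (2 * Real.pi * Complex.I * (h : ℂ) *
                ((Nat.nth (fun m : ℕ => ∃ j k : ℕ, m = 2 ^ j * 3 ^ k) n : ℂ)) * (x : ℂ))) /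
            (N : ℂ))
          atTop (nhds 0)) := by
  haveI : Fact ((0:ℝ) < 1) := ⟨zero_lt_one⟩
  -- a nonzero Fourier coefficient
  have hex : ∃ m : ℤ, m ≠ 0 ∧ ∫ x, fourier m x ∂μ ≠ 0 := by
    by_contra hc
    push_neg at hc
    exact hne (aux_ext μ fun m hm => hc m hm)
  obtain ⟨h₀, hh₀, hc0⟩ := hex
  set c : ℂ := ∫ x, fourier h₀ x ∂μ with hc
  -- invariance under multiplication by 2^j 3^k
  have inv2 : ∀ (j : ℕ) (n : ℤ), (∫ x, fourier (-(2 ^ j * n)) x ∂μ) = ∫ x, fourier (-n) x ∂μ := by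
    intro j
    induction j with
    | zero => intro n; norm_num
    | succ j ih =>
      intro n
      have : -(2 ^ (j+1) * n) = -(2 * (2 ^ j * n)) := by ring
      rw [this, (hinv (2 ^ j * n)).1, ih n]
  have inv3 : ∀ (k : ℕ) (n : ℤ), (∫ x, fourier (-(3 ^ k * n)) x ∂μ) = ∫ x, fourier (-n) x ∂μ := by
    intro k
    induction k with
    | zero => intro n; norm_num
    | succ k ih =>
      intro n
      have e : -(3 ^ (k+1) * n) = -(3 * (3 ^ k * n)) := by ring
      rw [e, (hinv (3 ^ k * n)).2, ih n]
  have invS : ∀ s : ℕ, (∃ j k : ℕ, s = 2 ^ j * 3 ^ k) →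
      (∫ x, fourier ((s : ℤ) * h₀) x ∂μ) = c := by
    rintro s ⟨j, k, rfl⟩
    have h1 : ((2 ^ j * 3 ^ k : ℕ) : ℤ) * h₀ = -((2:ℤ) ^ j * ((3:ℤ) ^ k * (-h₀))) := by
      push_cast; ring
    rw [h1, inv2 j, inv3 k, neg_neg]
  -- suppose the conclusion fails
  by_contra hcon
  push_neg at hcon
  -- the averaging functions
  set P : ℕ → Prop := fun m : ℕ => ∃ j k : ℕ, m = 2 ^ j * 3 ^ k with hP
  set s : ℕ → ℕ := fun n => Nat.nth P n with hs
  have hsP : ∀ n, P (s n) := fun n => Nat.nth_mem_of_infinite aux_infinite n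
  set F : ℕ → AddCircle (1:ℝ) → ℂ :=
    fun N y => (∑ n ∈ Finset.range N, fourier ((s n : ℤ) * h₀) y) / N with hF
  have hFcont : ∀ N, Continuous (F N) := by
    intro N
    apply Continuous.div_const
    exact continuous_finset_sum _ fun n _ => (fourier _).continuous
  -- ∫ F N ∂μ = c for N ≥ 1
  have hint : ∀ N : ℕ, N ≠ 0 → ∫ y, F N y ∂μ = c := by
    intro N hN
    simp only [hF]
    rw [integral_div, integral_finset_sum _ fun n _ =>
      aux_integrable μ (fourier _).continuous]
    rw [Finset.sum_congr rfl fun n _ => invS (s n) (hsP n)]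
    simp only [Finset.sum_const, Finset.card_range, nsmul_eq_mul]
    rw [mul_comm, mul_div_assoc, div_self (Nat.cast_ne_zero.2 hN), mul_one]
  -- a.e. pointwise convergence to 0
  have hae : ∀ᵐ y ∂μ, Tendsto (fun N => F N y) atTop (nhds 0) := by
    have hR : μ (Set.range fun q : ℚ => ((q : ℝ) : AddCircle (1:ℝ))) = 0 :=
      (Set.countable_range _).measure_zero μ
    have hR' : ∀ᵐ y ∂μ, y ∉ Set.range fun q : ℚ => ((q : ℝ) : AddCircle (1:ℝ)) := by
      rw [ae_iff]
      simpa [Set.range] using hR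
    filter_upwards [hR'] with y hy
    induction y using QuotientAddGroup.induction_on with
    | H x =>
    have hxirr : Irrational x := by
      intro ⟨q, hq⟩
      exact hy ⟨q, congrArg (fun r : ℝ => (r : AddCircle (1:ℝ))) hq⟩
    have htd := hcon x hxirr h₀ hh₀
    have heq : (fun N : ℕ =>
        (∑ n ∈ Finset.range N,
          Complex.exp (2 * Real.pi * Complex.I * (h₀ : ℂ) *
            ((Nat.nth (fun m : ℕ => ∃ j k : ℕ, m = 2 ^ j * 3 ^ k) n : ℂ)) * (x : ℂ))) /
        (N : ℂ)) = fun N => F N ((x : ℝ) : AddCircle (1:ℝ)) := by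
      funext N
      simp only [hF]
      congr 1
      apply Finset.sum_congr rfl
      intro n _
      rw [fourier_coe_apply]
      congr 1
      push_cast
      ring
    rw [heq] at htd
    exact htd
  -- uniform bound ‖F N y‖ ≤ 1
  have hbd : ∀ N : ℕ, ∀ y, ‖F N y‖ ≤ 1 := by
    intro N y
    simp only [hF, norm_div]
    rcases eq_or_ne N 0 with rfl | hN
    · simp
    · have hNpos : (0:ℝ) < ‖(N:ℂ)‖ := by
        rw [Complex.norm_natCast]
        exact_mod_cast Nat.pos_of_ne_zero hN
      rw [div_le_one hNpos]
      calc ‖∑ n ∈ Finset.range N, fourier ((s n : ℤ) * h₀) y‖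
          ≤ ∑ n ∈ Finset.range N, ‖fourier ((s n : ℤ) * h₀) y‖ := norm_sum_le _ _
        _ = ∑ n ∈ Finset.range N, 1 := by
            apply Finset.sum_congr rfl
            intro n _
            exact Circle.norm_coe _
        _ = (N : ℝ) := by simp
        _ ≤ ‖(N:ℂ)‖ := by rw [Complex.norm_natCast]
  -- dominated convergence
  have hdct : Tendsto (fun N => ∫ y, F N y ∂μ) atTop (nhds (∫ _ : AddCircle (1:ℝ), (0:ℂ) ∂μ)) := by
    apply tendsto_integral_of_dominated_convergence (fun _ => (1:ℝ))
    · exact fun N => (hFcont N).aestronglyMeasurable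
    · exact integrable_const 1
    · exact fun N => Eventually.of_forall fun y => hbd N y
    · exact hae
  rw [integral_zero] at hdct
  have hdct' : Tendsto (fun N => ∫ y, F N y ∂μ) atTop (nhds c) := by
    have hev : (fun _ : ℕ => c) =ᶠ[atTop] fun N => ∫ y, F N y ∂μ := by
      filter_upwards [eventually_ge_atTop 1] with N hN
      exact (hint N (by omega)).symm
    exact Tendsto.congr' hev tendsto_const_nhds
  exact hc0 (tendsto_nhds_unique hdct' hdct)
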